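/- Let D ⊆ ℝ^m (with the Euclidean norm) be a nonempty closed convex set, let f : ℝ^m → ℝ be convex, suppose f attains its minimum f* := min_{x ∈ D} f(x) on D and the set of minimizers D* := {x ∈ D : f(x) = f*} is bounded. Let γ : ℝ^m → ℝ^m satisfy f(y) − f(x) ≥ ⟨γ(x), y − x⟩ for all x, y ∈ D, and suppose there is G > 0 with ‖γ(x)‖ ≤ G for all x ∈ D. Let (s_t)_{t≥0} be positive reals with s_t → 0 and Σ_t s_t = ∞. For x^0 ∈ D define recursively x^{t+1} = p(x^t − s_t γ(x^t)), where p(z) denotes the unique point of D nearest to z. Then lim_{t→∞} min_{i ≤ t} f(x^i) = f*. -/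

import Mathlib

open MeasureTheory Filter Topology RealInnerProductSpace

set_option maxHeartbeats 1000000 in
/-- Convergence of the projected subgradient method with a
diminishing step size rule: `min_{i ≤ t} f(x^i) → f* = min_D f`. -/
theorem projected_subgradient_convergence
    {m : ℕ}
    (D : Set (EuclideanSpace ℝ (Fin m))) (hDne : D.Nonempty)
    (hDclosed : IsClosed D) (hDconv : Convex ℝ D)
    (f : EuclideanSpace ℝ (Fin m) → ℝ) (hf : ConvexOn ℝ Set.univ f)
    (xstar : EuclideanSpace ℝ (Fin m)) (hxstar : xstar ∈ D)
    (hmin : ∀ y ∈ D, f xstar ≤ f y)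
    (hbdd : Bornology.IsBounded {x | x ∈ D ∧ ∀ y ∈ D, f x ≤ f y})
    (γ : EuclideanSpace ℝ (Fin m) → EuclideanSpace ℝ (Fin m))
    (hγ : ∀ x ∈ D, ∀ y ∈ D, (inner ℝ (γ x) (y - x) : ℝ) ≤ f y - f x)
    (G : ℝ) (hG : 0 < G) (hγbdd : ∀ x ∈ D, ‖γ x‖ ≤ G)
    (s : ℕ → ℝ) (hs_pos : ∀ t, 0 < s t)
    (hs_lim : Tendsto s atTop (𝓝 0))
    (hs_div : Tendsto (fun n => ∑ t ∈ Finset.range n, s t) atTop atTop)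
    (p : EuclideanSpace ℝ (Fin m) → EuclideanSpace ℝ (Fin m))
    (hp_mem : ∀ z, p z ∈ D)
    (hp_nearest : ∀ z, ∀ y ∈ D, ‖p z - z‖ ≤ ‖y - z‖)
    (x : ℕ → EuclideanSpace ℝ (Fin m)) (hx0 : x 0 ∈ D)
    (hxrec : ∀ t, x (t + 1) = p (x t - s t • γ (x t))) :
    Tendsto (fun t => ⨅ i : Fin (t + 1), f (x i)) atTop (𝓝 (f xstar)) := by
  -- all iterates lie in D
  have hxD : ∀ t, x t ∈ D := by
    intro t
    induction t with
    | zero => exact hx0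
    | succ n _ => rw [hxrec]; exact hp_mem _
  -- variational inequality for the projection
  haveI : Nonempty D := hDne.to_subtype
  have hvar : ∀ z, ∀ w ∈ D, (inner ℝ (z - p z) (w - p z) : ℝ) ≤ 0 := by
    intro z w hw
    have heq : ‖z - p z‖ = ⨅ w : D, ‖z - (w : EuclideanSpace ℝ (Fin m))‖ := by
      apply le_antisymm
      · refine le_ciInf fun y => ?_
        have := hp_nearest z y y.2
        rw [norm_sub_rev z (p z), norm_sub_rev z (y : EuclideanSpace ℝ (Fin m))]
        exact this
      · have hbb : BddBelow (Set.range fun w : D => ‖z - (w : EuclideanSpace ℝ (Fin m))‖) := by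
          refine ⟨0, ?_⟩
          rintro r ⟨w, rfl⟩
          exact norm_nonneg _
        exact ciInf_le hbb ⟨p z, hp_mem z⟩
    exact (norm_eq_iInf_iff_real_inner_le_zero hDconv (hp_mem z)).1 heq w hw
  -- squared nonexpansiveness toward points of D
  have hsq : ∀ z, ∀ w, w ∈ D → ‖p z - w‖ ^ 2 ≤ ‖z - w‖ ^ 2 := by
    intro z w hw
    have h1 := hvar z w hw
    have h2 : ‖z - w‖ ^ 2
        = ‖z - p z‖ ^ 2 - 2 * (inner ℝ (z - p z) (w - p z) : ℝ) + ‖w - p z‖ ^ 2 := by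
      have h := norm_sub_sq_real (z - p z) (w - p z)
      rw [sub_sub_sub_cancel_right] at h
      exact h
    rw [norm_sub_rev (p z) w]
    nlinarith [sq_nonneg ‖z - p z‖]
  set a : ℕ → ℝ := fun t => ‖x t - xstar‖ ^ 2 with ha
  -- the key one-step inequality
  have key : ∀ t, a (t + 1) ≤ a t - 2 * s t * (f (x t) - f xstar) + s t ^ 2 * G ^ 2 := by
    intro t
    have hz := hsq (x t - s t • γ (x t)) xstar hxstar
    rw [← hxrec t] at hz
    have hexp : ‖x t - s t • γ (x t) - xstar‖ ^ 2
        = ‖x t - xstar‖ ^ 2 - 2 * (s t * (inner ℝ (γ (x t)) (x t - xstar) : ℝ))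
          + s t ^ 2 * ‖γ (x t)‖ ^ 2 := by
      have h := norm_sub_sq_real (x t - xstar) (s t • γ (x t))
      rw [sub_right_comm] at h
      rw [h, real_inner_smul_right, real_inner_comm, norm_smul, Real.norm_eq_abs,
        mul_pow, sq_abs]
    have hsub : f (x t) - f xstar ≤ (inner ℝ (γ (x t)) (x t - xstar) : ℝ) := by
      have h := hγ (x t) (hxD t) xstar hxstar
      have hneg : (xstar - x t) = -(x t - xstar) := by abel
      rw [hneg, inner_neg_right] at h
      linarith
    have hγn : ‖γ (x t)‖ ^ 2 ≤ G ^ 2 := by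
      nlinarith [hγbdd (x t) (hxD t), norm_nonneg (γ (x t))]
    have hst := hs_pos t
    have h1 : 2 * s t * (f (x t) - f xstar) ≤ 2 * (s t * (inner ℝ (γ (x t)) (x t - xstar) : ℝ)) := by
      nlinarith
    have h2 : s t ^ 2 * ‖γ (x t)‖ ^ 2 ≤ s t ^ 2 * G ^ 2 := by
      nlinarith [sq_nonneg (s t)]
    calc a (t + 1) ≤ ‖x t - s t • γ (x t) - xstar‖ ^ 2 := hz
      _ = ‖x t - xstar‖ ^ 2 - 2 * (s t * (inner ℝ (γ (x t)) (x t - xstar) : ℝ))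
          + s t ^ 2 * ‖γ (x t)‖ ^ 2 := hexp
      _ ≤ a t - 2 * s t * (f (x t) - f xstar) + s t ^ 2 * G ^ 2 := by
          simp only [ha]; linarith
  -- for every ε > 0 some iterate is ε-optimal
  have hfinal : ∀ ε : ℝ, 0 < ε → ∃ t, f (x t) < f xstar + ε := by
    intro ε hε
    by_contra hcon
    push_neg at hcon
    have h0 : Tendsto (fun t => s t * G ^ 2) atTop (𝓝 0) := by
      simpa using hs_lim.mul_const (G ^ 2)
    obtain ⟨T, hT⟩ := Metric.tendsto_atTop.mp h0 ε hε
    have step : ∀ t, T ≤ t → a (t + 1) ≤ a t - ε * s t := by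
      intro t ht
      have h1 := key t
      have h2 : s t * G ^ 2 ≤ ε := by
        have := hT t ht
        rw [Real.dist_eq, sub_zero] at this
        exact le_of_lt (lt_of_abs_lt this)
      have h3 := hcon t
      have hst := hs_pos t
      nlinarith
    have hsum : ∀ n, a (T + n) ≤ a T - ε * ∑ k ∈ Finset.range n, s (T + k) := by
      intro n
      induction n with
      | zero => simp
      | succ n ih =>
        have hstep := step (T + n) (Nat.le_add_right _ _)
        have e : T + (n + 1) = (T + n) + 1 := by omega
        rw [e, Finset.sum_range_succ, mul_add]
        linarith
    have htail : Tendsto (fun n => ∑ k ∈ Finset.range n, s (T + k)) atTop atTop := by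
      have h1 : Tendsto (fun n => ∑ t ∈ Finset.range (n + T), s t) atTop atTop :=
        hs_div.comp (tendsto_add_atTop_nat T)
      have h2 : ∀ n, ∑ k ∈ Finset.range n, s (T + k)
          = (∑ t ∈ Finset.range (n + T), s t) - ∑ t ∈ Finset.range T, s t := by
        intro n
        rw [add_comm n T, Finset.sum_range_add]
        ring
      simp only [h2]
      exact tendsto_atTop_add_const_right atTop _ h1
    obtain ⟨n, hn⟩ := (htail.eventually_gt_atTop (a T / ε)).exists
    have h5 := hsum n
    have h6 : 0 ≤ a (T + n) := sq_nonneg _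
    have h7 : a T < ε * ∑ k ∈ Finset.range n, s (T + k) := by
      rw [div_lt_iff₀ hε] at hn
      linarith [mul_comm ε (∑ k ∈ Finset.range n, s (T + k)), hn]
    linarith
  -- assemble: the running minimum is antitone, bounded below by f xstar
  set b : ℕ → ℝ := fun t => ⨅ i : Fin (t + 1), f (x i) with hb
  have blow : ∀ t, f xstar ≤ b t := fun t =>
    le_ciInf fun i => hmin _ (hxD i)
  have ble : ∀ t, b t ≤ f (x t) := by
    intro t
    have := ciInf_le (Finite.bddBelow_range fun i : Fin (t + 1) => f (x i)) (Fin.last t)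
    simpa using this
  have banti : Antitone b := by
    intro t1 t2 h
    refine le_ciInf fun i => ?_
    have := ciInf_le (Finite.bddBelow_range fun j : Fin (t2 + 1) => f (x j))
      (⟨i.1, by omega⟩ : Fin (t2 + 1))
    simpa using this
  have hbdd' : BddBelow (Set.range b) := ⟨f xstar, fun _ ⟨t, ht⟩ => ht ▸ blow t⟩
  have htend := tendsto_atTop_ciInf banti hbdd'
  have heq : (⨅ t, b t) = f xstar := by
    apply le_antisymm
    · refine le_of_forall_pos_le_add fun ε hε => ?_
      obtain ⟨t, ht⟩ := hfinal ε hε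
      exact le_trans (ciInf_le hbdd' t) (le_trans (ble t) (le_of_lt ht))
    · exact le_ciInf blow
  rw [heq] at htend
  exact htend
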